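/- Suppose a vertex v of a graph G, an integer r ≥ 1, and a positive number Ψ satisfy: the total number of balls allocated to vertices within distance r of v is at most Ψ·|B_v^r|, where B_v^r is the ball of radius r around v. Then, assuming the loads satisfy the smoothness property (adjacent loads differ by at most 1), the load of v satisfies X_v^(n) ≤ Ψ + Σ_{i=0}^{r} i·|N_v^i| / |B_v^r|, where N_v^i is the set of vertices at graph distance exactly i from v. -/

import Mathlib

open Finset
open scoped Classical

private lemma walk_load_bound {V : Type*} (G : SimpleGraph V) (X : V → ℕ)
    (hsmooth : ∀ a b, G.Adj a b → |(X a : ℤ) - (X b : ℤ)| ≤ 1) :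
    ∀ {a b : V} (p : G.Walk a b), (X a : ℤ) ≤ (X b : ℤ) + p.length := by
  intro a b p
  induction p with
  | nil => simp
  | cons h q ih =>
    have h1 := (abs_le.mp (hsmooth _ _ h)).2
    simp only [SimpleGraph.Walk.length_cons]
    push_cast
    omega

/-- **Upper bound on the load of a vertex from the smoothness property.**
If the total load on the ball `B_v^r` of radius `r` around `v` is at most `Ψ·|B_v^r|`,
and loads of adjacent vertices differ by at most one, then
`X v ≤ Ψ + (Σ_{i=0}^r i·|N_v^i|)/|B_v^r|`, where `N_v^i` is the sphere of radius `i`. -/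
theorem load_upper_bound_from_ball {V : Type*} [Fintype V] (G : SimpleGraph V)
    (hconn : G.Connected) (X : V → ℕ) (v : V) (r : ℕ) (hr : 1 ≤ r)
    (Ψ : ℝ) (hΨ : 0 < Ψ)
    (hsmooth : ∀ a b, G.Adj a b → |(X a : ℤ) - (X b : ℤ)| ≤ 1)
    (hball : (∑ u ∈ univ.filter (fun u => G.dist v u ≤ r), (X u : ℝ))
      ≤ Ψ * (univ.filter (fun u => G.dist v u ≤ r)).card) :
    (X v : ℝ) ≤ Ψ +
      (∑ i ∈ Finset.range (r + 1),
        (i : ℝ) * (univ.filter (fun u => G.dist v u = i)).card)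
      / (univ.filter (fun u => G.dist v u ≤ r)).card := by
  set B := univ.filter (fun u => G.dist v u ≤ r) with hB
  have hvB : v ∈ B := by simp [hB, SimpleGraph.dist_self]
  have hcard : (0 : ℝ) < B.card := by
    exact_mod_cast Finset.card_pos.mpr ⟨v, hvB⟩
  -- pointwise bound X v ≤ X u + dist v u
  have hpt : ∀ u : V, (X v : ℝ) ≤ (X u : ℝ) + G.dist v u := by
    intro u
    obtain ⟨p, hp⟩ := hconn.exists_walk_length_eq_dist v u
    have := walk_load_bound G X hsmooth p
    rw [hp] at this
    exact_mod_cast this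
  -- sum over B
  have hsum : (B.card : ℝ) * (X v : ℝ) ≤
      (∑ u ∈ B, (X u : ℝ)) + ∑ u ∈ B, (G.dist v u : ℝ) := by
    calc (B.card : ℝ) * (X v : ℝ) = ∑ _u ∈ B, (X v : ℝ) := by
          rw [Finset.sum_const, nsmul_eq_mul]
      _ ≤ ∑ u ∈ B, ((X u : ℝ) + G.dist v u) :=
          Finset.sum_le_sum fun u _ => hpt u
      _ = _ := Finset.sum_add_distrib
  -- rewrite distance sum as sphere sum
  have hdistsum : (∑ u ∈ B, (G.dist v u : ℝ)) =
      ∑ i ∈ Finset.range (r + 1),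
        (i : ℝ) * (univ.filter (fun u => G.dist v u = i)).card := by
    rw [← Finset.sum_fiberwise_of_maps_to (g := fun u => G.dist v u)
      (fun u hu => by
        simp only [hB, mem_filter, mem_univ, true_and] at hu
        exact Finset.mem_range.mpr (Nat.lt_succ_of_le hu))]
    refine Finset.sum_congr rfl fun i hi => ?_
    have hfe : B.filter (fun u => G.dist v u = i) =
        univ.filter (fun u => G.dist v u = i) := by
      ext u
      simp only [hB, mem_filter, mem_univ, true_and, and_iff_right_iff_imp]
      intro h; rw [h]; exact Nat.lt_succ_iff.mp (Finset.mem_range.mp hi)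
    rw [hfe]
    rw [Finset.sum_congr rfl (fun u hu => by
      rw [(Finset.mem_filter.mp hu).2])]
    rw [Finset.sum_const, nsmul_eq_mul, mul_comm]
  have key : (B.card : ℝ) * (X v : ℝ) ≤ Ψ * B.card +
      ∑ i ∈ Finset.range (r + 1),
        (i : ℝ) * (univ.filter (fun u => G.dist v u = i)).card := by
    calc (B.card : ℝ) * (X v : ℝ) ≤ _ := hsum
      _ ≤ _ := by rw [hdistsum]; exact add_le_add_left hball _
  have hend : (X v : ℝ) ≤ (Ψ * B.card + ∑ i ∈ Finset.range (r + 1),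
      (i : ℝ) * (univ.filter (fun u => G.dist v u = i)).card) / B.card :=
    (le_div_iff₀ hcard).mpr (by linarith)
  calc (X v : ℝ) ≤ _ := hend
    _ = _ := by rw [add_div, mul_div_cancel_right₀ _ hcard.ne']
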